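/- (Negative correlation across disjoint blocks.) Let Δ_1, …, Δ_t be pairwise disjoint subsets of {1, …, n}, each of cardinality k ≥ 1, let I ⊆ {1, …, n}, set ρ = |I|/n, and let δ > 0. For a uniformly random permutation π of {1, …, n}: P[ |π(I) ∩ Δ_j| > (ρ+δ)·k for all j = 1, …, t ] ≤ ( P[ |π(I) ∩ Δ_1| > (ρ+δ)·k ] )^t, and likewise P[ |π(I) ∩ Δ_j| < (ρ−δ)·k for all j = 1, …, t ] ≤ ( P[ |π(I) ∩ Δ_1| < (ρ−δ)·k ] )^t. -/

import Mathlib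

open scoped Classical
open Finset

variable {α : Type*} [Fintype α] [DecidableEq α]

/-- A permutation mapping a finset onto another finset of the same cardinality. -/
lemma exists_perm_image_eq {s t : Finset α} (h : s.card = t.card) :
    ∃ τ : Equiv.Perm α, s.image τ = t := by
  have h1 : Fintype.card {x // x ∈ s} = Fintype.card {x // x ∈ t} := by
    simpa [Fintype.card_coe] using h
  have h2 : Fintype.card {x // ¬ x ∈ s} = Fintype.card {x // ¬ x ∈ t} := by
    rw [Fintype.card_subtype_compl, Fintype.card_subtype_compl, h1]
  let e1 : {x // x ∈ s} ≃ {x // x ∈ t} := Fintype.equivOfCardEq h1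
  let e2 : {x // ¬ x ∈ s} ≃ {x // ¬ x ∈ t} := Fintype.equivOfCardEq h2
  let τ : Equiv.Perm α :=
    ((Equiv.sumCompl (· ∈ s)).symm.trans ((e1.sumCongr e2).trans (Equiv.sumCompl (· ∈ t))))
  refine ⟨τ, ?_⟩
  have hsub : s.image τ ⊆ t := by
    intro y hy
    obtain ⟨x, hx, rfl⟩ := mem_image.1 hy
    have hτ : τ x = (e1 ⟨x, hx⟩ : α) := by
      simp only [τ, Equiv.trans_apply, Equiv.sumCompl_symm_apply_of_pos hx,
        Equiv.sumCongr_apply, Sum.map_inl, Equiv.sumCompl_apply_inl]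
    rw [hτ]
    exact (e1 ⟨x, hx⟩).2
  apply eq_of_subset_of_card_le hsub
  rw [card_image_of_injective _ τ.injective, h]

lemma perm_fiber_const (I : Finset α) {S : Finset α} (hS : S.card = I.card) :
    (univ.filter (fun π : Equiv.Perm α => I.image π = S)).card
      = (univ.filter (fun π : Equiv.Perm α => I.image π = I)).card := by
  obtain ⟨τ, hτ⟩ := exists_perm_image_eq hS
  refine card_bij' (fun π _ => π.trans τ) (fun π _ => π.trans τ.symm) ?_ ?_ ?_ ?_
  · intro π hπ
    simp only [mem_filter, mem_univ, true_and] at hπ ⊢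
    rw [Equiv.coe_trans, ← Finset.image_image, hπ, hτ]
  · intro π hπ
    simp only [mem_filter, mem_univ, true_and] at hπ ⊢
    rw [Equiv.coe_trans, ← Finset.image_image, hπ, ← hτ, Finset.image_image]
    simp
  · intro π _; ext x; simp
  · intro π _; ext x; simp

lemma perm_to_set (I : Finset α) (Q : Finset α → Prop) :
    (univ.filter (fun π : Equiv.Perm α => Q (I.image π))).card
        * (Fintype.card α).choose I.card
      = ((univ.powersetCard I.card).filter Q).card * Fintype.card (Equiv.Perm α) := by
  set cI := (univ.filter (fun π : Equiv.Perm α => I.image π = I)).card with hcI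
  have hfib : ∀ (P : Finset α → Prop),
      (univ.filter (fun π : Equiv.Perm α => P (I.image π))).card
        = ((univ.powersetCard I.card).filter P).card * cI := by
    intro P
    rw [card_eq_sum_card_fiberwise (f := fun π : Equiv.Perm α => I.image π)
      (t := (univ.powersetCard I.card).filter P) ?hmaps]
    case hmaps =>
      intro π hπ
      simp only [Finset.mem_coe, mem_filter, mem_univ, true_and] at hπ ⊢
      exact ⟨mem_powersetCard.2 ⟨subset_univ _, card_image_of_injective _ π.injective⟩, hπ⟩
    have : ∀ S ∈ (univ.powersetCard I.card).filter P,
        ((univ.filter (fun π : Equiv.Perm α => P (I.image π))).filter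
          (fun π : Equiv.Perm α => I.image ⇑π = S)).card = cI := by
      intro S hS
      simp only [mem_filter, mem_powersetCard] at hS
      rw [filter_filter]
      have he : (univ.filter fun π : Equiv.Perm α => P (I.image ⇑π) ∧ I.image ⇑π = S)
          = univ.filter (fun π : Equiv.Perm α => I.image π = S) := by
        refine filter_congr fun π _ => ?_
        constructor
        · exact fun h => h.2
        · exact fun h => ⟨h ▸ hS.2, h⟩
      rw [he, perm_fiber_const I hS.1.2]
    rw [sum_congr rfl this, sum_const, smul_eq_mul]
  have htot : Fintype.card (Equiv.Perm α)
      = (Fintype.card α).choose I.card * cI := by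
    have := hfib (fun _ => True)
    simpa [Finset.card_univ, card_powersetCard] using this
  rw [hfib Q, htot]
  ring

lemma card_filter_split (D : Finset α) (p q : Finset α → Prop) (r : ℕ) :
    ((univ.powersetCard r).filter (fun S => p (S ∩ D) ∧ q (S \ D))).card
      = ∑ ab ∈ Finset.HasAntidiagonal.antidiagonal r,
          ((D.powersetCard ab.1).filter p).card * ((Dᶜ.powersetCard ab.2).filter q).card := by
  rw [card_eq_sum_card_fiberwise
    (f := fun S => ((S ∩ D).card, (S \ D).card)) (t := Finset.HasAntidiagonal.antidiagonal r) ?hmaps]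
  case hmaps =>
    intro S hS
    simp only [Finset.mem_coe, mem_filter, mem_powersetCard] at hS
    simp only [Finset.mem_coe, Finset.HasAntidiagonal.mem_antidiagonal]
    rw [card_inter_add_card_sdiff, hS.1.2]
  refine sum_congr rfl fun ab hab => ?_
  have habr : ab.1 + ab.2 = r := Finset.HasAntidiagonal.mem_antidiagonal.mp hab
  rw [← card_product]
  refine card_bij (fun S _ => (S ∩ D, S \ D)) ?_ ?_ ?_
  · intro S hS
    simp only [mem_filter, mem_powersetCard, mem_product] at hS ⊢
    obtain ⟨⟨⟨-, hcard⟩, hp, hq⟩, hpair⟩ := hS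
    have h1 : (S ∩ D).card = ab.1 := (Prod.mk.injEq _ _ _ _ ▸ hpair).1
    have h2 : (S \ D).card = ab.2 := (Prod.mk.injEq _ _ _ _ ▸ hpair).2
    exact ⟨⟨⟨inter_subset_right, h1⟩, hp⟩,
      ⟨fun x hx => mem_compl.2 (mem_sdiff.1 hx).2, h2⟩, hq⟩
  · intro S hS S' hS' hpair
    have h1 : S ∩ D = S' ∩ D := (Prod.mk.injEq _ _ _ _ ▸ hpair).1
    have h2 : S \ D = S' \ D := (Prod.mk.injEq _ _ _ _ ▸ hpair).2
    rw [← sdiff_union_inter S D, ← sdiff_union_inter S' D, h1, h2]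
  · rintro ⟨T, R⟩ hTR
    simp only [mem_filter, mem_powersetCard, mem_product] at hTR
    obtain ⟨⟨⟨hTD, hTc⟩, hpT⟩, ⟨hRD, hRc⟩, hqR⟩ := hTR
    have hdisjTR : Disjoint T R := by
      refine Finset.disjoint_left.2 fun x hxT hxR => ?_
      exact (mem_compl.1 (hRD hxR)) (hTD hxT)
    have hTu : (T ∪ R) ∩ D = T := by
      rw [union_inter_distrib_right, inter_eq_left.2 hTD,
        Finset.disjoint_iff_inter_eq_empty.1 ?_, union_empty]
      exact Finset.disjoint_left.2 fun x hxR hxD => (mem_compl.1 (hRD hxR)) hxD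
    have hRu : (T ∪ R) \ D = R := by
      rw [union_sdiff_distrib, sdiff_eq_empty_iff_subset.2 hTD, empty_union,
        Finset.sdiff_eq_self_iff_disjoint.2 ?_]
      exact Finset.disjoint_left.2 fun x hxR hxD => (mem_compl.1 (hRD hxR)) hxD
    refine ⟨T ∪ R, ?_, ?_⟩
    · simp only [mem_filter, mem_powersetCard]
      refine ⟨⟨⟨subset_univ _, ?_⟩, ?_, ?_⟩, ?_⟩
      · rw [card_union_of_disjoint hdisjTR, hTc, hRc, habr]
      · rw [hTu]; exact hpT
      · rw [hRu]; exact hqR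
      · simp only [hTu, hRu, hTc, hRc]
    · simp only [hTu, hRu]

lemma lym_step (D : Finset α) (p : Finset α → Prop)
    (hp : ∀ ⦃T T'⦄, T ⊆ T' → p T → p T') (a : ℕ) :
    ((D.powersetCard a).filter p).card * (D.card - a)
      ≤ ((D.powersetCard (a + 1)).filter p).card * (a + 1) := by
  set U := (D.powersetCard a).filter p with hU
  set V := (D.powersetCard (a + 1)).filter p with hV
  set E : Finset (Finset α × α) := U.biUnion (fun T => (D \ T).image (fun x => (T, x))) with hE
  set F : Finset (Finset α × α) := V.biUnion (fun T => T.image (fun x => (T, x))) with hF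
  have hdisjE : ∀ (W : Finset (Finset α)) (g : Finset α → Finset α),
      ∀ T ∈ W, ∀ T' ∈ W, T ≠ T' →
        Disjoint ((g T).image (fun x => (T, x))) ((g T').image (fun x => (T', x))) := by
    intro W g T _ T' _ hne
    refine disjoint_left.2 fun ab hab hab' => ?_
    obtain ⟨x, -, rfl⟩ := mem_image.1 hab
    obtain ⟨y, -, hy⟩ := mem_image.1 hab'
    exact hne (congrArg Prod.fst hy).symm
  have hEcard : E.card = U.card * (D.card - a) := by
    rw [hE, card_biUnion (hdisjE U (fun T => D \ T))]
    have hconst : ∀ T ∈ U, ((D \ T).image (fun x => (T, x))).card = D.card - a := by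
      intro T hT
      simp only [hU, mem_filter, mem_powersetCard] at hT
      rw [card_image_of_injective _ (fun x y hxy => congrArg Prod.snd hxy),
        card_sdiff_of_subset hT.1.1, hT.1.2]
    rw [sum_congr rfl hconst, sum_const, smul_eq_mul]
  have hFcard : F.card = V.card * (a + 1) := by
    rw [hF, card_biUnion ?hd]
    case hd => exact fun T hT T' hT' hne => hdisjE V (fun T => T) T hT T' hT' hne
    have hconst : ∀ T ∈ V, (T.image (fun x => (T, x))).card = a + 1 := by
      intro T hT
      simp only [hV, mem_filter, mem_powersetCard] at hT
      rw [card_image_of_injective _ (fun x y hxy => congrArg Prod.snd hxy), hT.1.2]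
    rw [sum_congr rfl hconst, sum_const, smul_eq_mul]
  rw [← hEcard, ← hFcard]
  refine card_le_card_of_injOn (fun Tx => (insert Tx.2 Tx.1, Tx.2)) ?_ ?_
  · rintro ⟨T, x⟩ hTx
    obtain ⟨T1, hT1, hmem⟩ := mem_biUnion.1 hTx
    obtain ⟨y, hy, heq⟩ := mem_image.1 hmem
    injection heq with h1 h2
    subst h1; subst h2
    simp only [hU, mem_filter, mem_powersetCard] at hT1
    have hxD : y ∈ D := (mem_sdiff.1 hy).1
    have hxT : y ∉ T1 := (mem_sdiff.1 hy).2
    refine mem_biUnion.2 ⟨insert y T1, ?_, mem_image.2 ⟨y, mem_insert_self _ _, rfl⟩⟩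
    simp only [hV, mem_filter, mem_powersetCard]
    exact ⟨⟨insert_subset hxD hT1.1.1, by rw [card_insert_of_notMem hxT, hT1.1.2]⟩,
      hp (subset_insert _ _) hT1.2⟩
  · rintro ⟨T, x⟩ hTx ⟨T', x'⟩ hTx' heq
    have hTx2 : (T, x) ∈ E := hTx
    have hTx2' : (T', x') ∈ E := hTx'
    obtain ⟨T1, hT1, hmem⟩ := mem_biUnion.1 hTx2
    obtain ⟨y, hy, heq1⟩ := mem_image.1 hmem
    injection heq1 with h1 h2
    subst h1; subst h2
    obtain ⟨T2, hT2, hmem'⟩ := mem_biUnion.1 hTx2'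
    obtain ⟨z, hz, heq2⟩ := mem_image.1 hmem'
    injection heq2 with h3 h4
    subst h3; subst h4
    injection heq with h5 h6
    subst h6
    have hyT : y ∉ T1 := (mem_sdiff.1 hy).2
    have hzT : y ∉ T2 := (mem_sdiff.1 hz).2
    have : T1 = T2 := by
      rw [← erase_insert hyT, ← erase_insert hzT, h5]
    simp [this]

lemma chain_aux (d : ℕ) (u : ℕ → ℕ)
    (step : ∀ m, u m * d.choose (m + 1) ≤ u (m + 1) * d.choose m) :
    ∀ {a b : ℕ}, a ≤ b → u a * d.choose b ≤ u b * d.choose a := by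
  intro a b hab
  induction b, hab using Nat.le_induction with
  | base => exact le_refl _
  | succ b hab ih =>
    by_cases hb1 : d.choose (b + 1) = 0
    · simp [hb1]
    · have hbD : b ≤ d := by
        by_contra h
        exact hb1 (Nat.choose_eq_zero_of_lt (by omega))
      have hcb : 0 < d.choose b := Nat.choose_pos hbD
      by_cases hub : u b = 0
      · have h0 : u a * d.choose b = 0 := by
          have h1 : u a * d.choose b ≤ 0 := by simpa [hub] using ih
          omega
        have hua : u a = 0 := by
          rcases Nat.mul_eq_zero.1 h0 with h | h
          · exact h
          · omega
        rw [hua, Nat.zero_mul]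
        exact Nat.zero_le _
      · have hpos : 0 < u b * d.choose b :=
          Nat.mul_pos (Nat.pos_of_ne_zero hub) hcb
        have key : (u a * d.choose (b + 1)) * (u b * d.choose b)
            ≤ (u (b + 1) * d.choose a) * (u b * d.choose b) :=
          calc (u a * d.choose (b + 1)) * (u b * d.choose b)
              = (u a * d.choose b) * (u b * d.choose (b + 1)) := by ring
            _ ≤ (u b * d.choose a) * (u (b + 1) * d.choose b) :=
                Nat.mul_le_mul ih (step b)
            _ = (u (b + 1) * d.choose a) * (u b * d.choose b) := by ring
        exact Nat.le_of_mul_le_mul_right key hpos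

lemma lym_chain (D : Finset α) (p : Finset α → Prop)
    (hp : ∀ ⦃T T'⦄, T ⊆ T' → p T → p T') {a b : ℕ} (hab : a ≤ b) :
    ((D.powersetCard a).filter p).card * D.card.choose b
      ≤ ((D.powersetCard b).filter p).card * D.card.choose a := by
  refine chain_aux D.card (fun m => ((D.powersetCard m).filter p).card) (fun m => ?_) hab
  have h1 := lym_step D p hp m
  have h2 : ((D.powersetCard m).filter p).card * D.card.choose (m + 1) * (m + 1)
      ≤ ((D.powersetCard (m + 1)).filter p).card * D.card.choose m * (m + 1) :=
    calc ((D.powersetCard m).filter p).card * D.card.choose (m + 1) * (m + 1)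
        = ((D.powersetCard m).filter p).card * (D.card.choose (m + 1) * (m + 1)) := by ring
      _ = ((D.powersetCard m).filter p).card * (D.card.choose m * (D.card - m)) := by
          rw [Nat.choose_succ_right_eq]
      _ = (((D.powersetCard m).filter p).card * (D.card - m)) * D.card.choose m := by ring
      _ ≤ (((D.powersetCard (m + 1)).filter p).card * (m + 1)) * D.card.choose m :=
          Nat.mul_le_mul_right _ h1
      _ = ((D.powersetCard (m + 1)).filter p).card * D.card.choose m * (m + 1) := by ring
  exact Nat.le_of_mul_le_mul_right h2 (Nat.succ_pos m)

lemma cheb_antidiag (r : ℕ) (u v w z : ℕ → ℕ)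
    (huv : ∀ a b, a ≤ b → u a * v b ≤ u b * v a)
    (hwz : ∀ a b, a ≤ b → w a * z b ≤ w b * z a) :
    (∑ x ∈ Finset.HasAntidiagonal.antidiagonal r, u x.1 * w x.2)
        * (∑ y ∈ Finset.HasAntidiagonal.antidiagonal r, v y.1 * z y.2)
      ≤ (∑ x ∈ Finset.HasAntidiagonal.antidiagonal r, u x.1 * z x.2)
        * (∑ y ∈ Finset.HasAntidiagonal.antidiagonal r, v y.1 * w y.2) := by
  rw [Finset.sum_mul_sum, Finset.sum_mul_sum]
  set ad := Finset.HasAntidiagonal.antidiagonal r with had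
  have key : ∀ x ∈ ad, ∀ y ∈ ad,
      (u x.1 * w x.2) * (v y.1 * z y.2) + (u y.1 * w y.2) * (v x.1 * z x.2)
        ≤ (u x.1 * z x.2) * (v y.1 * w y.2) + (u y.1 * z y.2) * (v x.1 * w x.2) := by
    have main : ∀ x ∈ ad, ∀ y ∈ ad, x.1 ≤ y.1 →
        (u x.1 * w x.2) * (v y.1 * z y.2) + (u y.1 * w y.2) * (v x.1 * z x.2)
          ≤ (u x.1 * z x.2) * (v y.1 * w y.2) + (u y.1 * z y.2) * (v x.1 * w x.2) := by
      intro x hx y hy h1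
      have hxr : x.1 + x.2 = r := Finset.HasAntidiagonal.mem_antidiagonal.mp hx
      have hyr : y.1 + y.2 = r := Finset.HasAntidiagonal.mem_antidiagonal.mp hy
      have h2 : y.2 ≤ x.2 := by omega
      have hX : u x.1 * v y.1 ≤ u y.1 * v x.1 := huv _ _ h1
      have hZ : w y.2 * z x.2 ≤ w x.2 * z y.2 := hwz _ _ h2
      calc (u x.1 * w x.2) * (v y.1 * z y.2) + (u y.1 * w y.2) * (v x.1 * z x.2)
          = (u x.1 * v y.1) * (w x.2 * z y.2) + (u y.1 * v x.1) * (w y.2 * z x.2) := by ring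
        _ ≤ (u x.1 * v y.1) * (w y.2 * z x.2) + (u y.1 * v x.1) * (w x.2 * z y.2) :=
            mul_add_mul_le_mul_add_mul hX hZ
        _ = (u x.1 * z x.2) * (v y.1 * w y.2) + (u y.1 * z y.2) * (v x.1 * w x.2) := by ring
    intro x hx y hy
    rcases le_total x.1 y.1 with h | h
    · exact main x hx y hy h
    · have := main y hy x hx h
      omega
  have hdist : ∀ (f g : ℕ × ℕ → ℕ × ℕ → ℕ),
      (∑ x ∈ ad, ∑ y ∈ ad, (f x y + g x y))
        = (∑ x ∈ ad, ∑ y ∈ ad, f x y) + (∑ x ∈ ad, ∑ y ∈ ad, g x y) := by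
    intro f g
    rw [← Finset.sum_add_distrib]
    exact Finset.sum_congr rfl fun x _ => Finset.sum_add_distrib
  have e1 : (∑ x ∈ ad, ∑ y ∈ ad, (u y.1 * w y.2) * (v x.1 * z x.2))
      = ∑ x ∈ ad, ∑ y ∈ ad, (u x.1 * w x.2) * (v y.1 * z y.2) := Finset.sum_comm
  have e2 : (∑ x ∈ ad, ∑ y ∈ ad, (u y.1 * z y.2) * (v x.1 * w x.2))
      = ∑ x ∈ ad, ∑ y ∈ ad, (u x.1 * z x.2) * (v y.1 * w y.2) := Finset.sum_comm
  have hmain := Finset.sum_le_sum fun (x : ℕ × ℕ) (hx : x ∈ ad) =>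
    Finset.sum_le_sum fun (y : ℕ × ℕ) (hy : y ∈ ad) => key x hx y hy
  rw [hdist, hdist, e1, e2] at hmain
  omega

lemma negcor2 (D : Finset α) (P Q : Finset α → Prop) (r : ℕ)
    (hPD : ∀ S, P S ↔ P (S ∩ D))
    (hQD : ∀ S, Q S ↔ Q (S \ D))
    (hPm : ∀ ⦃T T'⦄, T ⊆ T' → P T → P T')
    (hQm : ∀ ⦃T T'⦄, T ⊆ T' → Q T → Q T') :
    ((univ.powersetCard r).filter (fun S => P S ∧ Q S)).card * (Fintype.card α).choose r
      ≤ ((univ.powersetCard r).filter P).card * ((univ.powersetCard r).filter Q).card := by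
  obtain ⟨Tr, hTr⟩ : ∃ Tr : Finset α → Prop, ∀ R, Tr R := ⟨fun _ => True, fun _ => trivial⟩
  have e1 : (univ.powersetCard r).filter (fun S => P S ∧ Q S)
      = (univ.powersetCard r).filter (fun S => P (S ∩ D) ∧ Q (S \ D)) :=
    filter_congr fun S _ => by rw [← hPD, ← hQD]
  have e2 : (univ.powersetCard r).filter P
      = (univ.powersetCard r).filter (fun S => P (S ∩ D) ∧ Tr (S \ D)) :=
    filter_congr fun S _ => by simp [← hPD S, hTr]
  have e3 : (univ.powersetCard r).filter Q
      = (univ.powersetCard r).filter (fun S => Tr (S ∩ D) ∧ Q (S \ D)) :=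
    filter_congr fun S _ => by simp [← hQD S, hTr]
  have e4 : (Fintype.card α).choose r
      = (((univ : Finset α).powersetCard r).filter
          (fun S => Tr (S ∩ D) ∧ Tr (S \ D))).card := by
    rw [filter_true_of_mem (fun S _ => ⟨hTr _, hTr _⟩), card_powersetCard, card_univ]
  rw [e1, e2, e3]
  conv_lhs => rw [e4]
  rw [card_filter_split D P Q r, card_filter_split D P Tr r,
    card_filter_split D Tr Q r, card_filter_split D Tr Tr r]
  have hv : ∀ m, ((D.powersetCard m).filter Tr).card = D.card.choose m := by
    intro m
    rw [filter_true_of_mem (fun S _ => hTr S), card_powersetCard]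
  have hz : ∀ m, ((Dᶜ.powersetCard m).filter Tr).card = Dᶜ.card.choose m := by
    intro m
    rw [filter_true_of_mem (fun S _ => hTr S), card_powersetCard]
  refine cheb_antidiag r (fun m => ((D.powersetCard m).filter P).card)
    (fun m => ((D.powersetCard m).filter Tr).card)
    (fun m => ((Dᶜ.powersetCard m).filter Q).card)
    (fun m => ((Dᶜ.powersetCard m).filter Tr).card) ?_ ?_
  · intro a b hab
    simp only [hv]
    exact lym_chain D P hPm hab
  · intro a b hab
    simp only [hz]
    exact lym_chain Dᶜ Q hQm hab

lemma sym_card (A B : Finset α) (h : A.card = B.card) (r : ℕ) (g : ℕ → Prop) :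
    ((univ.powersetCard r).filter (fun S => g (S ∩ A).card)).card
      = ((univ.powersetCard r).filter (fun S => g (S ∩ B).card)).card := by
  obtain ⟨τ, hτ⟩ := exists_perm_image_eq h
  have hcard : ∀ (S : Finset α), (S.image τ ∩ B).card = (S ∩ A).card := by
    intro S
    rw [← hτ, ← Finset.image_inter _ _ τ.injective,
      card_image_of_injective _ τ.injective]
  have hτ' : B.image ⇑τ.symm = A := by
    rw [← hτ, Finset.image_image]
    simp
  have hcard' : ∀ (S : Finset α), (S.image ⇑τ.symm ∩ A).card = (S ∩ B).card := by
    intro S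
    rw [← hτ', ← Finset.image_inter _ _ τ.symm.injective,
      card_image_of_injective _ τ.symm.injective]
  refine card_bij' (fun S _ => S.image τ) (fun S _ => S.image ⇑τ.symm) ?_ ?_ ?_ ?_
  · intro S hS
    simp only [mem_filter, mem_powersetCard] at hS ⊢
    exact ⟨⟨subset_univ _, by rw [card_image_of_injective _ τ.injective, hS.1.2]⟩,
      by rw [hcard]; exact hS.2⟩
  · intro S hS
    simp only [mem_filter, mem_powersetCard] at hS ⊢
    exact ⟨⟨subset_univ _, by rw [card_image_of_injective _ τ.symm.injective, hS.1.2]⟩,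
      by rw [hcard']; exact hS.2⟩
  · intro S _
    simp [Finset.image_image]
  · intro S _
    simp [Finset.image_image]

lemma mb {t : ℕ} (Δ : Fin t → Finset α)
    (hdisj : Pairwise fun i j : Fin t => Disjoint (Δ i) (Δ j)) (c : ℝ) (r : ℕ)
    (J : Finset (Fin t)) :
    ((univ.powersetCard r).filter
        (fun S => ∀ j ∈ J, (((S ∩ Δ j).card : ℝ) > c))).card
          * ((Fintype.card α).choose r) ^ J.card
      ≤ (Fintype.card α).choose r
          * ∏ j ∈ J, ((univ.powersetCard r).filter
              (fun S => (((S ∩ Δ j).card : ℝ) > c))).card := by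
  induction J using Finset.induction_on with
  | empty =>
    simp only [card_empty, pow_zero, mul_one, prod_empty]
    rw [filter_true_of_mem (fun S _ => fun j hj => absurd hj (Finset.notMem_empty j)),
      card_powersetCard, card_univ]
  | @insert j0 J' hj0 ih =>
    set D := J'.biUnion Δ with hD
    have hsub : ∀ j ∈ J', Δ j ⊆ D := fun j hj => subset_biUnion_of_mem Δ hj
    have hdisj0 : Disjoint (Δ j0) D := by
      rw [hD, disjoint_biUnion_right]
      intro j hj
      exact hdisj (fun h => hj0 (h ▸ hj))
    have hsub0 : Δ j0 ⊆ Dᶜ := fun x hx => mem_compl.2 (disjoint_left.1 hdisj0 hx)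
    obtain ⟨P, hP⟩ : ∃ P : Finset α → Prop,
        ∀ S, P S = ∀ j ∈ J', (((S ∩ Δ j).card : ℝ) > c) := ⟨_, fun _ => rfl⟩
    obtain ⟨Q, hQ⟩ : ∃ Q : Finset α → Prop,
        ∀ S, Q S = (((S ∩ Δ j0).card : ℝ) > c) := ⟨_, fun _ => rfl⟩
    have key := negcor2 D P Q r ?hPD ?hQD ?hPm ?hQm
    case hPD =>
      intro S
      rw [hP, hP]
      refine forall_congr' fun j => imp_congr_right fun hj => ?_
      rw [inter_assoc, inter_eq_right.2 (hsub j hj)]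
    case hQD =>
      intro S
      rw [hQ, hQ]
      have hstep : (S \ D) ∩ Δ j0 = S ∩ Δ j0 := by
        ext x
        simp only [mem_inter, mem_sdiff]
        constructor
        · exact fun h => ⟨h.1.1, h.2⟩
        · exact fun h => ⟨⟨h.1, fun hxD => (mem_compl.1 (hsub0 h.2)) hxD⟩, h.2⟩
      rw [hstep]
    case hPm =>
      intro T T' hTT' hT
      rw [hP] at hT ⊢
      intro j hj
      refine lt_of_lt_of_le (hT j hj) ?_
      exact_mod_cast card_le_card (inter_subset_inter hTT' (Finset.Subset.refl _))
    case hQm =>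
      intro T T' hTT' hT
      rw [hQ] at hT ⊢
      refine lt_of_lt_of_le hT ?_
      exact_mod_cast card_le_card (inter_subset_inter hTT' (Finset.Subset.refl _))
    have h1 : (univ.powersetCard r).filter
          (fun S => ∀ j ∈ insert j0 J', (((S ∩ Δ j).card : ℝ) > c))
        = (univ.powersetCard r).filter (fun S => P S ∧ Q S) := by
      refine filter_congr fun S _ => ?_
      rw [hP, hQ, Finset.forall_mem_insert]
      exact and_comm
    have h2 : (univ.powersetCard r).filter P
        = (univ.powersetCard r).filter (fun S => ∀ j ∈ J', (((S ∩ Δ j).card : ℝ) > c)) :=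
      filter_congr fun S _ => by rw [hP]
    have h3 : (univ.powersetCard r).filter Q
        = (univ.powersetCard r).filter (fun S => (((S ∩ Δ j0).card : ℝ) > c)) :=
      filter_congr fun S _ => by rw [hQ]
    rw [h2, h3] at key
    rw [h1, card_insert_of_notMem hj0, prod_insert hj0]
    calc ((univ.powersetCard r).filter (fun S => P S ∧ Q S)).card
          * ((Fintype.card α).choose r) ^ (J'.card + 1)
        = (((univ.powersetCard r).filter (fun S => P S ∧ Q S)).card
            * (Fintype.card α).choose r) * ((Fintype.card α).choose r) ^ J'.card := by ring
      _ ≤ (((univ.powersetCard r).filter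
              (fun S => ∀ j ∈ J', (((S ∩ Δ j).card : ℝ) > c))).card
            * ((univ.powersetCard r).filter
              (fun S => (((S ∩ Δ j0).card : ℝ) > c))).card)
            * ((Fintype.card α).choose r) ^ J'.card := Nat.mul_le_mul_right _ key
      _ = ((univ.powersetCard r).filter
              (fun S => (((S ∩ Δ j0).card : ℝ) > c))).card
            * (((univ.powersetCard r).filter
              (fun S => ∀ j ∈ J', (((S ∩ Δ j).card : ℝ) > c))).card
              * ((Fintype.card α).choose r) ^ J'.card) := by ring
      _ ≤ ((univ.powersetCard r).filter
              (fun S => (((S ∩ Δ j0).card : ℝ) > c))).card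
            * ((Fintype.card α).choose r
              * ∏ j ∈ J', ((univ.powersetCard r).filter
                  (fun S => (((S ∩ Δ j).card : ℝ) > c))).card) := Nat.mul_le_mul_left _ ih
      _ = (Fintype.card α).choose r
            * (((univ.powersetCard r).filter
                (fun S => (((S ∩ Δ j0).card : ℝ) > c))).card
              * ∏ j ∈ J', ((univ.powersetCard r).filter
                  (fun S => (((S ∩ Δ j).card : ℝ) > c))).card) := by ring

lemma part1 {n k t : ℕ} (Δ : Fin t → Finset (Fin n))
    (hdisj : Pairwise fun i j : Fin t => Disjoint (Δ i) (Δ j))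
    (hcard : ∀ j : Fin t, (Δ j).card = k) (j0 : Fin t)
    (I : Finset (Fin n)) (c : ℝ) :
    (((univ.filter (fun π : Equiv.Perm (Fin n) =>
          ∀ j : Fin t, ((I.image (fun x => π x) ∩ Δ j).card : ℝ) > c)).card : ℝ)
        / (Fintype.card (Equiv.Perm (Fin n)) : ℝ))
      ≤ (((univ.filter (fun π : Equiv.Perm (Fin n) =>
            ((I.image (fun x => π x) ∩ Δ j0).card : ℝ) > c)).card : ℝ)
          / (Fintype.card (Equiv.Perm (Fin n)) : ℝ)) ^ t := by
  set r := I.card with hr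
  have hC : 0 < (Fintype.card (Fin n)).choose r := by
    apply Nat.choose_pos
    simpa [hr] using card_le_univ I
  have hF : 0 < Fintype.card (Equiv.Perm (Fin n)) := Fintype.card_pos
  obtain ⟨QA, hQA⟩ : ∃ QA : Finset (Fin n) → Prop,
      ∀ S, QA S = ∀ j : Fin t, (((S ∩ Δ j).card : ℝ) > c) := ⟨_, fun _ => rfl⟩
  obtain ⟨QB, hQB⟩ : ∃ QB : Finset (Fin n) → Prop,
      ∀ S, QB S = (((S ∩ Δ j0).card : ℝ) > c) := ⟨_, fun _ => rfl⟩
  have hps1 := perm_to_set I QA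
  have hps2 := perm_to_set I QB
  -- bridge the permutation-level filters
  have hbp1 : (univ.filter (fun π : Equiv.Perm (Fin n) =>
        ∀ j : Fin t, ((I.image (fun x => π x) ∩ Δ j).card : ℝ) > c)).card
      = (univ.filter (fun π : Equiv.Perm (Fin n) => QA (I.image π))).card :=
    congrArg Finset.card (filter_congr fun π _ => by rw [hQA])
  have hbp2 : (univ.filter (fun π : Equiv.Perm (Fin n) =>
        ((I.image (fun x => π x) ∩ Δ j0).card : ℝ) > c)).card
      = (univ.filter (fun π : Equiv.Perm (Fin n) => QB (I.image π))).card :=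
    congrArg Finset.card (filter_congr fun π _ => by rw [hQB])
  -- bridge the set-level filters
  have hbs1 : (((univ : Finset (Fin n)).powersetCard r).filter QA).card
      = (((univ : Finset (Fin n)).powersetCard r).filter
          (fun S => ∀ j ∈ (univ : Finset (Fin t)), (((S ∩ Δ j).card : ℝ) > c))).card :=
    congrArg Finset.card (filter_congr fun S _ => by rw [hQA]; simp)
  have hbs2 : (((univ : Finset (Fin n)).powersetCard r).filter QB).card
      = (((univ : Finset (Fin n)).powersetCard r).filter
          (fun S => (((S ∩ Δ j0).card : ℝ) > c))).card :=
    congrArg Finset.card (filter_congr fun S _ => by rw [hQB])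
  have hsym : ∀ j : Fin t,
      ((((univ : Finset (Fin n))).powersetCard r).filter
        (fun S => (((S ∩ Δ j).card : ℝ) > c))).card
      = ((((univ : Finset (Fin n))).powersetCard r).filter
        (fun S => (((S ∩ Δ j0).card : ℝ) > c))).card :=
    fun j => sym_card (Δ j) (Δ j0) (by rw [hcard, hcard]) r (fun m => (m : ℝ) > c)
  have hmb := mb Δ hdisj c r (univ : Finset (Fin t))
  rw [Finset.prod_congr rfl (fun j _ => hsym j), prod_const, card_univ,
    Fintype.card_fin t, ← hbs1, ← hbs2] at hmb
  -- now pure arithmetic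
  rw [hbp1, hbp2]
  have h1 : ((univ.filter (fun π : Equiv.Perm (Fin n) => QA (I.image π))).card : ℝ)
          / (Fintype.card (Equiv.Perm (Fin n)) : ℝ)
      = ((((univ : Finset (Fin n)).powersetCard r).filter QA).card : ℝ)
          / (((Fintype.card (Fin n)).choose r : ℕ) : ℝ) := by
    rw [div_eq_div_iff (by exact_mod_cast hF.ne') (by exact_mod_cast hC.ne')]
    exact_mod_cast hps1
  have h2 : ((univ.filter (fun π : Equiv.Perm (Fin n) => QB (I.image π))).card : ℝ)
          / (Fintype.card (Equiv.Perm (Fin n)) : ℝ)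
      = ((((univ : Finset (Fin n)).powersetCard r).filter QB).card : ℝ)
          / (((Fintype.card (Fin n)).choose r : ℕ) : ℝ) := by
    rw [div_eq_div_iff (by exact_mod_cast hF.ne') (by exact_mod_cast hC.ne')]
    exact_mod_cast hps2
  rw [h1, h2, div_pow, div_le_div_iff₀ (by exact_mod_cast hC) (by positivity)]
  have := hmb.trans_eq (mul_comm _ _)
  exact_mod_cast this

theorem stmt14 (n k t : ℕ) (hk : 1 ≤ k) (ht : 1 ≤ t)
    (Δ : Fin t → Finset (Fin n))
    (hdisj : Pairwise fun i j : Fin t => Disjoint (Δ i) (Δ j))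
    (hcard : ∀ j : Fin t, (Δ j).card = k)
    (I : Finset (Fin n)) (δ : ℝ) (hδ : 0 < δ) :
    (((Finset.univ.filter (fun π : Equiv.Perm (Fin n) =>
          ∀ j : Fin t,
            ((I.image (fun x => π x) ∩ Δ j).card : ℝ) > ((I.card : ℝ) / n + δ) * k)).card : ℝ)
        / (Fintype.card (Equiv.Perm (Fin n)) : ℝ)
      ≤ (((Finset.univ.filter (fun π : Equiv.Perm (Fin n) =>
            ((I.image (fun x => π x) ∩ Δ ⟨0, ht⟩).card : ℝ)
              > ((I.card : ℝ) / n + δ) * k)).card : ℝ)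
          / (Fintype.card (Equiv.Perm (Fin n)) : ℝ)) ^ t) ∧
    (((Finset.univ.filter (fun π : Equiv.Perm (Fin n) =>
          ∀ j : Fin t,
            ((I.image (fun x => π x) ∩ Δ j).card : ℝ) < ((I.card : ℝ) / n - δ) * k)).card : ℝ)
        / (Fintype.card (Equiv.Perm (Fin n)) : ℝ)
      ≤ (((Finset.univ.filter (fun π : Equiv.Perm (Fin n) =>
            ((I.image (fun x => π x) ∩ Δ ⟨0, ht⟩).card : ℝ)
              < ((I.card : ℝ) / n - δ) * k)).card : ℝ)
          / (Fintype.card (Equiv.Perm (Fin n)) : ℝ)) ^ t) := by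
  have hn : 0 < n := by
    have h1 : k ≤ Fintype.card (Fin n) := hcard ⟨0, ht⟩ ▸ card_le_univ (Δ ⟨0, ht⟩)
    rw [Fintype.card_fin] at h1
    omega
  have hIle : I.card ≤ n := by
    have h := card_le_univ I
    rw [Fintype.card_fin] at h
    exact h
  constructor
  · exact part1 Δ hdisj hcard ⟨0, ht⟩ I (((I.card : ℝ) / n + δ) * k)
  · have key : ∀ (π : Equiv.Perm (Fin n)) (j : Fin t),
        (((I.image (fun x => π x) ∩ Δ j).card : ℝ) < ((I.card : ℝ) / n - δ) * k)
          ↔ (((Iᶜ.image (fun x => π x) ∩ Δ j).card : ℝ) > ((Iᶜ.card : ℝ) / n + δ) * k) := by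
      intro π j
      have himg : Iᶜ.image (fun x => π x) = (I.image (fun x => π x))ᶜ := by
        ext y
        simp only [Finset.mem_image, Finset.mem_compl]
        constructor
        · rintro ⟨x, hx, rfl⟩
          rintro ⟨x', hx', he⟩
          exact hx (by rwa [π.injective he] at hx')
        · intro h
          exact ⟨π.symm y, fun hy => h ⟨π.symm y, hy, π.apply_symm_apply y⟩,
            π.apply_symm_apply y⟩
      have h2 : (I.image (fun x => π x))ᶜ ∩ Δ j = Δ j \ (I.image (fun x => π x)) := by
        ext x
        simp only [mem_inter, mem_compl, mem_sdiff]
        exact and_comm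
      have hcompl : ((Iᶜ.image (fun x => π x)) ∩ Δ j).card
          + (I.image (fun x => π x) ∩ Δ j).card = k := by
        rw [himg, h2, inter_comm]
        rw [add_comm]
        rw [card_inter_add_card_sdiff]
        exact hcard j
      have hc' : (((Iᶜ.image (fun x => π x)) ∩ Δ j).card : ℝ)
          + ((I.image (fun x => π x) ∩ Δ j).card : ℝ) = (k : ℝ) := by
        exact_mod_cast hcompl
      have hcc : (Iᶜ.card : ℝ) = (n : ℝ) - (I.card : ℝ) := by
        rw [card_compl, Fintype.card_fin, Nat.cast_sub hIle]
      have hid : ((Iᶜ.card : ℝ) / n + δ) * k = k - ((I.card : ℝ) / n - δ) * k := by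
        rw [hcc]
        have hn' : (n : ℝ) ≠ 0 := by positivity
        field_simp
        ring
      rw [hid]
      constructor
      · intro h
        linarith
      · intro h
        linarith
    have hf1 : (Finset.univ.filter (fun π : Equiv.Perm (Fin n) =>
          ∀ j : Fin t,
            ((I.image (fun x => π x) ∩ Δ j).card : ℝ) < ((I.card : ℝ) / n - δ) * k)).card
        = (Finset.univ.filter (fun π : Equiv.Perm (Fin n) =>
          ∀ j : Fin t,
            ((Iᶜ.image (fun x => π x) ∩ Δ j).card : ℝ) > ((Iᶜ.card : ℝ) / n + δ) * k)).card :=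
      congrArg Finset.card (filter_congr fun π _ => forall_congr' fun j => key π j)
    have hf2 : (Finset.univ.filter (fun π : Equiv.Perm (Fin n) =>
          ((I.image (fun x => π x) ∩ Δ ⟨0, ht⟩).card : ℝ) < ((I.card : ℝ) / n - δ) * k)).card
        = (Finset.univ.filter (fun π : Equiv.Perm (Fin n) =>
          ((Iᶜ.image (fun x => π x) ∩ Δ ⟨0, ht⟩).card : ℝ)
            > ((Iᶜ.card : ℝ) / n + δ) * k)).card :=
      congrArg Finset.card (filter_congr fun π _ => key π ⟨0, ht⟩)
    rw [hf1, hf2]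
    exact part1 Δ hdisj hcard ⟨0, ht⟩ Iᶜ (((Iᶜ.card : ℝ) / n + δ) * k)
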